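/- Normal crossing example for the quadric: for h = x₁² + ⋯ + x₄² and f₂ = x₅ in ℂ⁵ (or more variables), the identity 2·δ_h x₅^s = (Σ_{i=1}^4 ∂/∂xᵢ · xᵢ)·δ_h x₅^s holds in ℛ_h ⊗ x₅^s, where δ_h = class of 1/(x₁²+⋯+x₄²); equivalently, Σ_{i=1}^4 ∂/∂xᵢ(xᵢ/(x₁²+⋯+x₄²)) = 2/(x₁²+⋯+x₄²) as rational functions. Hence b'_{x₅}(h,s) = 1. -/

import Mathlib

open Polynomial

noncomputable section

set_option maxHeartbeats 1000000
set_option synthInstance.maxHeartbeats 400000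

/-- The ring `𝒪` of germs (polynomial model `ℂ[x₁,…,xₙ]`). -/
abbrev OO (n : ℕ) := MvPolynomial (Fin n) ℂ
/-- The fraction field of `𝒪`. -/
abbrev KK (n : ℕ) := FractionRing (OO n)

variable {n : ℕ}

/-- Inclusion `𝒪 → K`. -/
def toK {n : ℕ} (r : OO n) : KK n := algebraMap _ _ r

/-- A family of derivations of `K` extending the partial derivatives `∂/∂xᵢ` of `𝒪`. -/
def ExtendsPderiv (d : Fin n → Derivation ℂ (KK n) (KK n)) : Prop :=
  ∀ (i : Fin n) (r : OO n), d i (toK r) = toK (MvPolynomial.pderiv i r)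

/-- Coefficientwise action of a derivation of `K` on `K[s]`. -/
def coeffDer (d : Derivation ℂ (KK n) (KK n)) :
    Derivation ℂ (Polynomial (KK n)) (Polynomial (KK n)) :=
  PolynomialModule.equivPolynomialSelf.compDer d.mapCoeffs

/-- Multiplication operator on `K[s]`. -/
def mulOp (a : Polynomial (KK n)) : Module.End ℂ (Polynomial (KK n)) :=
  LinearMap.mulLeft ℂ a

/-- Twisted partial-derivative operator on `K[s]·f^s`:
`∂ᵢ(g(s) f^s) = ((∂ᵢ g)(s) + s·g(s)·(∂ᵢf/f))·f^s`. -/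
def Dop (d : Derivation ℂ (KK n) (KK n)) (f : OO n) : Module.End ℂ (Polynomial (KK n)) :=
  (coeffDer d).toLinearMap + mulOp (Polynomial.X * Polynomial.C (d (toK f) / toK f))

/-- The image of `𝒟[s]` in `End(K[s]·f^s)`: the ℂ-algebra generated by multiplications by
elements of `𝒪`, multiplication by `s`, and the twisted partials `∂ᵢ`. -/
def WeylS (d : Fin n → Derivation ℂ (KK n) (KK n)) (f : OO n) :
    Subalgebra ℂ (Module.End ℂ (Polynomial (KK n))) :=
  Algebra.adjoin ℂ
    ((Set.range fun r : OO n => mulOp (Polynomial.C (toK r))) ∪ {mulOp Polynomial.X} ∪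
      Set.range fun i => Dop (d i) f)

/-- The `𝒟[s]`-orbit span `𝒟[s]·T` of a set `T ⊆ K[s]·f^s`. -/
def DSpan (d : Fin n → Derivation ℂ (KK n) (KK n)) (f : OO n)
    (T : Set (Polynomial (KK n))) : Submodule ℂ (Polynomial (KK n)) :=
  Submodule.span ℂ {y | ∃ P ∈ WeylS d f, ∃ t ∈ T, y = P t}

/-- The image of `𝒟` in `End(K)` (untwisted action). -/
def Weyl0 (d : Fin n → Derivation ℂ (KK n) (KK n)) : Subalgebra ℂ (Module.End ℂ (KK n)) :=
  Algebra.adjoin ℂ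
    ((Set.range fun r : OO n => LinearMap.mulLeft ℂ (toK r)) ∪
      Set.range fun i => (d i).toLinearMap)

/-- The `𝒟`-orbit span `𝒟·T` of a set `T ⊆ K`. -/
def DSpan0 (d : Fin n → Derivation ℂ (KK n) (KK n)) (T : Set (KK n)) : Submodule ℂ (KK n) :=
  Submodule.span ℂ {y | ∃ P ∈ Weyl0 d, ∃ t ∈ T, y = P t}

/-- The ℂ-submodule `Σ_{g ∈ G} 𝒪[1/g]` of `K`. -/
def locSub (G : Set (OO n)) : Submodule ℂ (KK n) :=
  Submodule.span ℂ {x | ∃ r : OO n, ∃ g ∈ G, ∃ k : ℕ, x = toK r * (toK g)⁻¹ ^ k}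

/-- Polynomials in `s` all of whose coefficients lie in `V`. -/
def polySub (V : Submodule ℂ (KK n)) : Submodule ℂ (Polynomial (KK n)) where
  carrier := {g | ∀ m, g.coeff m ∈ V}
  add_mem' := fun ha hb m => by simpa using V.add_mem (ha m) (hb m)
  zero_mem' := fun m => by rw [Polynomial.coeff_zero]; exact V.zero_mem
  smul_mem' := fun c g hg m => by
    simpa [Polynomial.coeff_smul] using V.smul_mem c (hg m)

/-- Maximal `(p+1)×(p+1)` minor of the Jacobian matrix of `(h₁,…,h_p,f)`
on the columns `cols`. -/
def minorHF {p : ℕ} (h : Fin p → OO n) (f : OO n) (cols : Fin (p + 1) → Fin n) : OO n :=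
  Matrix.det (Matrix.of fun i j =>
    Fin.lastCases (MvPolynomial.pderiv (cols j) f)
      (fun i' => MvPolynomial.pderiv (cols j) (h i')) i)

/-- `p×p` minor of the Jacobian matrix of `h = (h₁,…,h_p)` on the columns `cols`. -/
def minorH {p : ℕ} (h : Fin p → OO n) (cols : Fin p → Fin n) : OO n :=
  Matrix.det (Matrix.of fun i j => MvPolynomial.pderiv (cols j) (h i))

/-- Image of `b(s) ∈ ℂ[s]` in `K[s]`. -/
def bK {n : ℕ} (b : Polynomial ℂ) : Polynomial (KK n) :=
  b.map ((algebraMap (OO n) (KK n)).comp MvPolynomial.C)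

open MvPolynomial in
lemma aux_card (n : ℕ) (hn : 5 ≤ n) :
    (Finset.univ.filter (fun i : Fin n => (i : ℕ) < 4)).card = 4 := by
  have : Finset.univ.filter (fun i : Fin n => (i : ℕ) < 4)
      = Finset.map (Fin.castLEEmb (by omega : 4 ≤ n)) Finset.univ := by
    ext i
    simp only [Finset.mem_filter, Finset.mem_univ, true_and, Finset.mem_map,
      Fin.castLEEmb_apply]
    constructor
    · intro hi; exact ⟨⟨i, hi⟩, rfl⟩
    · rintro ⟨j, rfl⟩; simpa using j.isLt
  rw [this]; simp

open MvPolynomial in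
lemma aux_qne (n : ℕ) (hn : 5 ≤ n) (q : OO n)
    (hq : q = ∑ i ∈ Finset.univ.filter (fun i : Fin n => (i : ℕ) < 4),
      MvPolynomial.X i ^ 2) : toK q ≠ 0 := by
  have hq0 : q ≠ 0 := by
    intro h0
    have := congrArg (MvPolynomial.eval (fun _ => (1:ℂ))) h0
    rw [hq] at this
    simp [Finset.sum_const, aux_card n hn] at this
  simpa [toK, map_eq_zero_iff _ (IsFractionRing.injective (OO n) (KK n))] using hq0

open MvPolynomial in
lemma aux_pderiv (n : ℕ) (q : OO n)
    (hq : q = ∑ i ∈ Finset.univ.filter (fun i : Fin n => (i : ℕ) < 4),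
      MvPolynomial.X i ^ 2) (j : Fin n) :
    MvPolynomial.pderiv j q = if (j:ℕ) < 4 then 2 * MvPolynomial.X j else 0 := by
  rw [hq, map_sum]
  by_cases hj : (j:ℕ) < 4
  · rw [if_pos hj, Finset.sum_eq_single j]
    · rw [pderiv_pow, pderiv_X_self]; ring
    · intro i _ hne
      rw [pderiv_pow, pderiv_X_of_ne hne, mul_zero]
    · simp [hj]
  · rw [if_neg hj]
    refine Finset.sum_eq_zero fun i hi => ?_
    have hne : i ≠ j := by
      rintro rfl; exact hj (by simpa using hi)
    rw [pderiv_pow, pderiv_X_of_ne hne, mul_zero]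

open MvPolynomial in
lemma aux_main (n : ℕ) (hn : 5 ≤ n) (d : Fin n → Derivation ℂ (KK n) (KK n))
    (hd : ExtendsPderiv d) (q : OO n)
    (hq : q = ∑ i ∈ Finset.univ.filter (fun i : Fin n => (i : ℕ) < 4),
      MvPolynomial.X i ^ 2) :
    ∑ i ∈ Finset.univ.filter (fun i : Fin n => (i : ℕ) < 4),
        d i (toK (MvPolynomial.X i) * (toK q)⁻¹) = 2 * (toK q)⁻¹ := by
  have hqne := aux_qne n hn q hq
  have step : ∀ i ∈ Finset.univ.filter (fun i : Fin n => (i : ℕ) < 4),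
      d i (toK (MvPolynomial.X i) * (toK q)⁻¹)
      = (toK q)⁻¹ - 2 * toK (MvPolynomial.X i ^ 2) * ((toK q)⁻¹ * (toK q)⁻¹) := by
    intro i hi
    have hi4 : (i : ℕ) < 4 := by simpa using hi
    rw [Derivation.leibniz, Derivation.leibniz_inv, hd, hd, aux_pderiv n q hq i,
      if_pos hi4, pderiv_X_self]
    simp only [toK, map_mul, map_one, map_pow, map_ofNat, smul_eq_mul]
    ring
  rw [Finset.sum_congr rfl step, Finset.sum_sub_distrib, Finset.sum_const, aux_card n hn]
  have h2 : ∑ i ∈ Finset.univ.filter (fun i : Fin n => (i : ℕ) < 4),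
      2 * toK (MvPolynomial.X i ^ 2) * ((toK q)⁻¹ * (toK q)⁻¹)
      = 2 * toK q * ((toK q)⁻¹ * (toK q)⁻¹) := by
    have hqs : toK q = ∑ i ∈ Finset.univ.filter (fun i : Fin n => (i : ℕ) < 4),
        toK (MvPolynomial.X i ^ 2) := by
      rw [hq]; simp only [toK, map_sum]
    generalize (toK q)⁻¹ * (toK q)⁻¹ = c
    rw [hqs, Finset.mul_sum, Finset.sum_mul]
  rw [h2]
  field_simp
  ring_nf
  rw [mul_inv_cancel₀ hqne]
  norm_num

lemma coeffDer_C (d : Derivation ℂ (KK n) (KK n)) (a : KK n) :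
    coeffDer d (Polynomial.C a) = Polynomial.C (d a) := by
  show PolynomialModule.equivPolynomialSelf (d.mapCoeffs (Polynomial.C a)) = _
  rw [Derivation.mapCoeffs_C, PolynomialModule.equivPolynomialSelf_apply_eq,
    PolynomialModule.equivPolynomial_single, Polynomial.monomial_zero_left]

lemma Dop_C (dd : Derivation ℂ (KK n) (KK n)) (f : OO n) (hdf : dd (toK f) = 0)
    (a : KK n) : Dop dd f (Polynomial.C a) = Polynomial.C (dd a) := by
  simp [Dop, mulOp, coeffDer_C, hdf]

open MvPolynomial in
lemma aux_minor (n : ℕ) (hn : 5 ≤ n) (q f : OO n)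
    (hq : q = ∑ i ∈ Finset.univ.filter (fun i : Fin n => (i : ℕ) < 4),
      MvPolynomial.X i ^ 2)
    (hf : f = MvPolynomial.X (⟨4, hn⟩ : Fin n)) (i : Fin n) (hi4 : (i:ℕ) < 4) :
    minorHF (fun _ : Fin 1 => q) f ![i, ⟨4, hn⟩] = 2 * MvPolynomial.X i := by
  rw [minorHF, Matrix.det_fin_two]
  simp only [Matrix.of_apply, Fin.lastCases, Fin.reverseInduction, Matrix.cons_val_zero, Matrix.cons_val_one, Matrix.head_cons]
  rw [hf]
  have hne : i ≠ (⟨4, by omega⟩ : Fin n) := by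
    intro hh; rw [Fin.ext_iff] at hh; simp at hh; omega
  rw [MvPolynomial.pderiv_X_self, MvPolynomial.pderiv_X_of_ne (Ne.symm hne),
    aux_pderiv n q hq i, aux_pderiv n q hq ⟨4, by omega⟩, if_pos hi4, if_neg (by simp)]
  have h0 : (0 : Fin 2) ≠ Fin.last 1 := by decide
  have h1 : (1 : Fin 2) = Fin.last 1 := by decide
  simp only [Fin.reverseInduction.go, Fin.isValue, Fin.coe_ofNat_eq_mod, dite_true, dite_false, cast_eq]
  rw [dif_neg (by decide : ¬ (0 % (1 + 1) = 1))]
  ring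

open MvPolynomial in
lemma aux_dif (n : ℕ) (hn : 5 ≤ n) (d : Fin n → Derivation ℂ (KK n) (KK n))
    (hd : ExtendsPderiv d) (f : OO n)
    (hf : f = MvPolynomial.X (⟨4, hn⟩ : Fin n)) (i : Fin n) (hi4 : (i:ℕ) < 4) :
    d i (toK f) = 0 := by
  rw [hd, hf, MvPolynomial.pderiv_X_of_ne (by intro hh; rw [Fin.ext_iff] at hh; simp at hh; omega)]
  simp [toK]

/-- for `h = x₁²+⋯+x₄²` and `f₂ = x₅` in `ℂⁿ` (`n ≥ 5`), one has
`Σ_{i=1}^4 ∂/∂xᵢ(xᵢ/(x₁²+⋯+x₄²)) = 2/(x₁²+⋯+x₄²)` as rational functions — i.e.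
`2·δ_h x₅^s = (Σ_{i=1}^4 ∂ᵢ·xᵢ)·δ_h x₅^s` — and hence `b'_{x₅}(h,s) = 1`. -/
theorem quadric_normal_crossing (n : ℕ) (hn : 5 ≤ n)
    (d : Fin n → Derivation ℂ (KK n) (KK n)) (hd : ExtendsPderiv d)
    (q : OO n) (hq : q = ∑ i ∈ Finset.univ.filter (fun i : Fin n => (i : ℕ) < 4),
      MvPolynomial.X i ^ 2)
    (h : Fin 1 → OO n) (hh : h = fun _ => q)
    (f : OO n) (hf : f = MvPolynomial.X (⟨4, by omega⟩ : Fin n))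
    (delta : KK n) (hdelta : delta = (toK q)⁻¹)
    (V : Submodule ℂ (KK n)) (hV : V = locSub {f})
    (memB' : Polynomial ℂ → Prop)
    (hmemB' : ∀ b : Polynomial ℂ, memB' b ↔
      bK b * Polynomial.C delta ∈
        DSpan d f ({y | ∃ cols : Fin 2 → Fin n, StrictMono cols ∧
            y = Polynomial.C (toK (minorHF h f cols) * delta)} ∪
          {Polynomial.C (toK f * delta)}) ⊔ polySub V) :
    -- the rational-function identity `Σ_{i<4} ∂ᵢ(xᵢ/q) = 2/q`
    (∑ i ∈ Finset.univ.filter (fun i : Fin n => (i : ℕ) < 4),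
        d i (toK (MvPolynomial.X i) * (toK q)⁻¹) = 2 * (toK q)⁻¹) ∧
    -- hence `b'_{x₅}(h,s) = 1`: the unit polynomial `1` already satisfies the defining
    -- functional equation, so the monic generator is `1`
    memB' 1 ∧ (∀ c : Polynomial ℂ, memB' c → (1 : Polynomial ℂ) ∣ c) := by
  have hmain := aux_main n hn d hd q hq
  refine ⟨hmain, ?_, fun c _ => one_dvd c⟩
  subst hdelta hh
  rw [hmemB']
  have hbK1 : bK (n := n) 1 = 1 := by simp [bK]
  rw [hbK1, one_mul]
  apply Submodule.mem_sup_left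
  have x4lt : 4 < n := by omega
  set x4 : Fin n := ⟨4, x4lt⟩ with hx4
  set F := Finset.univ.filter (fun i : Fin n => (i : ℕ) < 4) with hF
  have key : ∀ i ∈ F,
      Dop (d i) f (Polynomial.C (toK (minorHF (fun _ : Fin 1 => q) f ![i, x4]) * (toK q)⁻¹)) ∈
        DSpan d f ({y | ∃ cols : Fin 2 → Fin n, StrictMono cols ∧
            y = Polynomial.C (toK (minorHF (fun _ : Fin 1 => q) f cols) * (toK q)⁻¹)} ∪
          {Polynomial.C (toK f * (toK q)⁻¹)}) := by
    intro i hi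
    have hi4 : (i : ℕ) < 4 := by simpa [hF] using hi
    apply Submodule.subset_span
    refine ⟨Dop (d i) f, Algebra.subset_adjoin (Or.inr ⟨i, rfl⟩), _,
      Or.inl ⟨![i, x4], ?_, rfl⟩, rfl⟩
    intro a b hab
    fin_cases a <;> fin_cases b <;>
      simp_all [Fin.lt_def] <;> omega
  have sum_mem := Submodule.sum_mem _ key
  have hval : ∀ i ∈ F,
      Dop (d i) f (Polynomial.C (toK (minorHF (fun _ : Fin 1 => q) f ![i, x4]) * (toK q)⁻¹))
      = Polynomial.C (d i (toK (MvPolynomial.X i) * (toK q)⁻¹)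
          + d i (toK (MvPolynomial.X i) * (toK q)⁻¹)) := by
    intro i hi
    have hi4 : (i : ℕ) < 4 := by simpa [hF] using hi
    rw [Dop_C _ _ (aux_dif n hn d hd f hf i hi4), aux_minor n hn q f hq hf i hi4]
    rw [show (2 * MvPolynomial.X i : OO n) = MvPolynomial.X i + MvPolynomial.X i from by ring]
    rw [show toK (MvPolynomial.X i + MvPolynomial.X i) =
      toK (MvPolynomial.X i) + toK (MvPolynomial.X i) from map_add (algebraMap (OO n) (KK n)) _ _]
    rw [add_mul, map_add]
  have hsumval : ∑ i ∈ F,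
      Dop (d i) f (Polynomial.C (toK (minorHF (fun _ : Fin 1 => q) f ![i, x4]) * (toK q)⁻¹))
      = Polynomial.C (2 * (toK q)⁻¹ + 2 * (toK q)⁻¹) := by
    rw [Finset.sum_congr rfl hval, ← map_sum Polynomial.C _ F, Finset.sum_add_distrib, hmain]
  have hfinal : Polynomial.C ((toK q)⁻¹ : KK n)
      = (4⁻¹ : ℂ) • ∑ i ∈ F,
        Dop (d i) f (Polynomial.C (toK (minorHF (fun _ : Fin 1 => q) f ![i, x4]) * (toK q)⁻¹)) := by
    rw [hsumval, Polynomial.smul_C]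
    congr 1
    rw [Algebra.smul_def, map_inv₀, map_ofNat]
    have h4 : (4 : KK n) ≠ 0 := by
      intro hcon
      have := congrArg (fun z => z * 0) hcon
      norm_num at hcon
    field_simp
    ring
  rw [hfinal]
  exact Submodule.smul_mem _ _ sum_mem
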